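/- Let F₂ = F(a,b) be the free group with basis {a,b}. For g ∈ F₂ let ‖g‖_A denote the cyclically reduced length of g with respect to the basis {a,b}, and let ‖g‖_B := ‖ψ⁻¹(g)‖_A, where ψ is the automorphism of F₂ with ψ(a) = a and ψ(b) = ab (so that ‖·‖_B is the cyclically reduced length with respect to the free basis {a, ab}). Then: (1) for every integer k and every automorphism φ of F₂, ‖φ([a,b]^k)‖_A = ‖φ([a,b]^k)‖_B = 4|k|; and (2) the functions ‖·‖_A and ‖·‖_B on F₂ are not equal (for instance ‖b‖_A = 1 while ‖b‖_B = 2). -/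

import Mathlib

set_option linter.unusedSectionVars false
set_option linter.unnecessarySimpa false
set_option linter.unusedTactic false

namespace NPf
open FreeGroup List

variable {α : Type*} [DecidableEq α]

/-- negation of a letter -/
def neg (s : α × Bool) : α × Bool := (s.1, !s.2)

/-- `cp s t` : the two adjacent letters `s, t` cancel. -/
abbrev cp (s t : α × Bool) : Prop := s.1 = t.1 ∧ s.2 = !t.2

lemma cp_self (s : α × Bool) : ¬ cp s s := by simp [cp]

lemma cp_neg_self (s : α × Bool) : cp s (neg s) := by simp [cp, neg]

lemma eq_neg_of_cp {s t : α × Bool} (h : cp s t) : t = neg s := by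
  obtain ⟨h1, h2⟩ := h
  cases t; cases s; simp_all [neg]

lemma cp_neg_neg {s t : α × Bool} : cp (neg t) (neg s) ↔ cp s t := by
  simp [cp, neg, eq_comm, Bool.eq_not_iff]

lemma invRev_cons (s : α × Bool) (L : List (α × Bool)) :
    invRev (s :: L) = invRev L ++ [neg s] := by
  simp [invRev, neg]

lemma invRev_singleton (s : α × Bool) : invRev [s] = [neg s] := by
  simp [invRev, neg]

lemma invRev_append (L₁ L₂ : List (α × Bool)) :
    invRev (L₁ ++ L₂) = invRev L₂ ++ invRev L₁ := by
  simp [invRev]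

lemma head?_invRev (L : List (α × Bool)) : (invRev L).head? = L.getLast?.map neg := by
  simp [invRev, head?_reverse, getLast?_map]; rfl

lemma getLast?_invRev (L : List (α × Bool)) : (invRev L).getLast? = L.head?.map neg := by
  simp [invRev, getLast?_reverse, head?_map]; rfl

/-- A word is reduced iff no adjacent pair cancels. -/
def Rd (L : List (α × Bool)) : Prop := List.IsChain (fun s t => ¬ cp s t) L

lemma rd_nil : Rd ([] : List (α × Bool)) := List.isChain_nil

lemma rd_reduce (L : List (α × Bool)) : Rd (reduce L) := by
  induction L with
  | nil => exact rd_nil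
  | cons s L ih =>
    rw [reduce.cons]
    rcases h : reduce L with - | ⟨t, T⟩
    · simp [Rd]
    · rw [h] at ih
      show Rd (if s.1 = t.1 ∧ s.2 = !t.2 then T else s :: t :: T)
      by_cases hc : s.1 = t.1 ∧ s.2 = !t.2
      · rw [if_pos hc]; exact ih.tail
      · rw [if_neg hc]; exact ih.cons_cons hc

lemma reduce_eq_self {L : List (α × Bool)} (h : Rd L) : reduce L = L := by
  induction L with
  | nil => rfl
  | cons s L ih =>
    have hL : Rd L := h.tail
    rw [reduce.cons, ih hL]
    rcases hL' : L with - | ⟨t, T⟩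
    · rfl
    · have : ¬ cp s t := by
        subst hL'
        exact (List.isChain_cons_cons.mp h).1
      simp only [if_neg this]

lemma rd_iff {L : List (α × Bool)} : Rd L ↔ reduce L = L :=
  ⟨reduce_eq_self, fun h => h ▸ rd_reduce L⟩

lemma rd_toWord (x : FreeGroup α) : Rd (toWord x) := rd_iff.mpr (reduce_toWord x)

lemma toWord_mk_rd {L : List (α × Bool)} (h : Rd L) : (mk L).toWord = L := by
  rw [toWord_mk, reduce_eq_self h]

lemma rd_invRev {L : List (α × Bool)} (h : Rd L) : Rd (invRev L) := by
  rw [rd_iff] at h ⊢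
  rw [reduce_invRev, h]

/-- matching of a suffix of `u` against an inverted prefix of `v` -/
def Mt (u v : List (α × Bool)) (j : ℕ) : Prop :=
  ∃ u₁ w v₁, u = u₁ ++ w ∧ v = invRev w ++ v₁ ∧ w.length = j

lemma mt_zero (u v : List (α × Bool)) : Mt u v 0 :=
  ⟨u, [], v, by simp [invRev]⟩

lemma mt_iff {u v : List (α × Bool)} {j : ℕ} :
    Mt u v j ↔ j ≤ u.length ∧ j ≤ v.length ∧ u.drop (u.length - j) = invRev (v.take j) := by
  constructor
  · rintro ⟨u₁, w, v₁, rfl, rfl, rfl⟩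
    refine ⟨by simp, by simp [invRev_length], ?_⟩
    have h1 : (u₁ ++ w).length - w.length = u₁.length := by simp
    rw [h1, drop_left' rfl, take_left' (by simp [invRev_length]), invRev_invRev]
  · rintro ⟨h1, h2, h3⟩
    refine ⟨u.take (u.length - j), u.drop (u.length - j), v.drop j, (take_append_drop _ _).symm, ?_, ?_⟩
    · rw [h3, invRev_invRev]
      exact (take_append_drop _ _).symm
    · rw [length_drop]; omega

/-- the decidable version used for `Nat.findGreatest` -/
abbrev cancP (u v : List (α × Bool)) (j : ℕ) : Prop :=
  j ≤ u.length ∧ j ≤ v.length ∧ u.drop (u.length - j) = invRev (v.take j)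

/-- the maximal cancellation between the end of `u` and the beginning of `v` -/
def canc (u v : List (α × Bool)) : ℕ :=
  Nat.findGreatest (cancP u v) (min u.length v.length)

lemma mt_canc (u v : List (α × Bool)) : Mt u v (canc u v) := by
  rw [mt_iff]
  show cancP u v (canc u v)
  unfold canc
  exact Nat.findGreatest_spec (P := cancP u v) (Nat.zero_le _) (mt_iff.mp (mt_zero u v))

lemma le_canc {u v : List (α × Bool)} {j : ℕ} (h : Mt u v j) : j ≤ canc u v := by
  rw [mt_iff] at h
  unfold canc
  exact Nat.le_findGreatest (by omega) h

lemma canc_le_left (u v : List (α × Bool)) : canc u v ≤ u.length :=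
  le_trans (Nat.findGreatest_le _) (min_le_left _ _)

lemma canc_le_right (u v : List (α × Bool)) : canc u v ≤ v.length :=
  le_trans (Nat.findGreatest_le _) (min_le_right _ _)

/-- at the maximal cancellation, the letters at the junction do not cancel -/
lemma canc_junction {u v : List (α × Bool)} {A w v₁ : List (α × Bool)} {s t : α × Bool}
    (hu : u = (A ++ [s]) ++ w) (hv : v = invRev w ++ (t :: v₁))
    (hw : w.length = canc u v) (hc : cp s t) : False := by
  have hmt : Mt u v (w.length + 1) := by
    refine ⟨A, s :: w, v₁, by simp [hu], ?_, by simp⟩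
    rw [hv, invRev_cons, ← eq_neg_of_cp hc]
    simp
  have := le_canc hmt
  omega

/-- decomposition of the product of two elements of the free group -/
lemma mul_decomp (x y : FreeGroup α) :
    ∃ u₁ w v₁, toWord x = u₁ ++ w ∧ toWord y = invRev w ++ v₁ ∧
      w.length = canc (toWord x) (toWord y) ∧ toWord (x * y) = u₁ ++ v₁ := by
  obtain ⟨u₁, w, v₁, hu, hv, hl⟩ := mt_canc (toWord x) (toWord y)
  refine ⟨u₁, w, v₁, hu, hv, hl, ?_⟩
  have hx : x = mk (u₁ ++ w) := by rw [← hu, mk_toWord]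
  have hy : y = mk (invRev w ++ v₁) := by rw [← hv, mk_toWord]
  have hxy : x * y = mk (u₁ ++ v₁) := by
    rw [hx, hy, ← mul_mk, ← mul_mk, ← mul_mk, ← inv_mk, mul_assoc (mk u₁),
      ← mul_assoc (mk w), mul_inv_cancel, one_mul, mul_mk]
  rw [hxy]
  apply toWord_mk_rd
  rw [Rd, isChain_append]
  refine ⟨(rd_toWord x).prefix ⟨w, hu.symm⟩, (rd_toWord y).suffix ⟨invRev w, hv.symm⟩, ?_⟩
  intro s hs t ht hc
  obtain ⟨A, hA⟩ : ∃ A, u₁ = A ++ [s] := by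
    have hne : u₁ ≠ [] := by rintro rfl; simp at hs
    refine ⟨u₁.dropLast, ?_⟩
    have := getLast?_eq_getLast hne
    rw [this] at hs
    obtain rfl : s = u₁.getLast hne := by simpa using hs.symm
    exact (dropLast_append_getLast hne).symm
  obtain ⟨B, hB⟩ : ∃ B, v₁ = t :: B := by
    rcases v₁ with - | ⟨t', B⟩
    · simp at ht
    · obtain rfl : t' = t := by simpa using ht
      exact ⟨B, rfl⟩
  exact canc_junction (hA ▸ hu) (hB ▸ hv) hl hc

lemma len_mul (x y : FreeGroup α) :
    (toWord (x * y)).length + 2 * canc (toWord x) (toWord y)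
      = (toWord x).length + (toWord y).length := by
  obtain ⟨u₁, w, v₁, hu, hv, hl, hxy⟩ := mul_decomp x y
  have h1 : (toWord x).length = u₁.length + w.length := by rw [hu]; simp
  have h2 : (toWord y).length = w.length + v₁.length := by rw [hv]; simp [invRev_length]
  have h3 : (toWord (x * y)).length = u₁.length + v₁.length := by rw [hxy]; simp
  omega

lemma len_inv (x : FreeGroup α) : (toWord x⁻¹).length = (toWord x).length := by
  rw [toWord_inv, invRev_length]


lemma self_canc_lt {u : List (α × Bool)} (h : Rd u) (hne : u ≠ []) :
    2 * canc u u < u.length := by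
  by_contra hcon
  push_neg at hcon
  set n := u.length with hn
  set j := canc u u with hj
  have hjn : j ≤ n := canc_le_left u u
  have hnpos : 0 < n := List.length_pos_iff.mpr hne
  have hdrop := (mt_iff.mp (mt_canc u u)).2.2
  rw [← hn, ← hj] at hdrop
  have hlen1 : (u.drop (n - j)).length = j := by
    rw [length_drop]; omega
  have hlen2 : (invRev (u.take j)).length = j := by
    rw [invRev_length, length_take]; omega
  have key : ∀ i, i < j → ∀ (h1 : n - j + i < n) (h2 : j - 1 - i < n),
      u[n - j + i]'h1 = neg (u[j - 1 - i]'h2) := by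
    intro i hi h1 h2
    have hi1 : i < (u.drop (n - j)).length := by omega
    have e1 : (u.drop (n - j))[i]'hi1 = u[n - j + i]'h1 := by
      rw [getElem_drop]
    have hi2 : i < (invRev (u.take j)).length := by omega
    have e2 : (invRev (u.take j))[i]'hi2 = neg (u[j - 1 - i]'h2) := by
      show ((u.take j).map (fun g : α × Bool => (g.1, !g.2))).reverse[i]'(by
        simp only [length_reverse, length_map, length_take]; omega) = _
      rw [getElem_reverse]
      have hlen3 : ((u.take j).map (fun g : α × Bool => (g.1, !g.2))).length = j := by
        rw [length_map, length_take]; omega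
      simp only [hlen3]
      rw [getElem_map, getElem_take]
      rfl
    rw [← e1, getElem_of_eq hdrop hi1, e2]
  have hchain := List.isChain_iff_getElem.mp h
  rcases Nat.even_or_odd (2 * j - n) with ⟨k, hk⟩ | ⟨k, hk⟩
  · -- even : adjacent cancelling pair
    have hik : k < j := by omega
    have h1 : n - j + k < n := by omega
    have h2 : j - 1 - k < n := by omega
    have hrel := key k hik h1 h2
    have hadj : n - j + k = (j - 1 - k) + 1 := by omega
    have hcp : cp (u[j-1-k]'h2) (u[n-j+k]'h1) := by
      rw [hrel]; exact cp_neg_self _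
    have := hchain (j - 1 - k) (by omega)
    have e : u[j - 1 - k + 1]'(by omega) = u[n - j + k]'h1 := by
      congr 1
      omega
    exact this (by rw [e]; exact hcp)
  · -- odd : a letter equal to its own inverse
    have hik : k < j := by omega
    have h1 : n - j + k < n := by omega
    have h2 : j - 1 - k < n := by omega
    have hrel := key k hik h1 h2
    have heq : n - j + k = j - 1 - k := by omega
    have e : u[n - j + k]'h1 = u[j - 1 - k]'h2 := by
      congr 1
    have := congrArg Prod.snd (e.symm.trans hrel)
    simp [neg] at this

lemma opp_no_death {u v : FreeGroup α} (hv : v ≠ 1)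
    (h1 : 2 * canc (toWord u) (toWord v) ≤ (toWord v).length)
    (h2 : 2 * canc (toWord v) (toWord u⁻¹) ≤ (toWord v).length) :
    canc (toWord u) (toWord v) + canc (toWord v) (toWord u⁻¹) < (toWord v).length := by
  by_contra hcon
  push_neg at hcon
  have hVne : toWord v ≠ [] := fun h => hv (toWord_eq_nil_iff.mp h)
  have hVpos : 0 < (toWord v).length := List.length_pos_iff.mpr hVne
  obtain ⟨U₁, w, V₁, hU, hV, hw⟩ := mt_canc (toWord u) (toWord v)
  obtain ⟨V₂, w', U₂, hV', hU', hw'⟩ := mt_canc (toWord v) (toWord u⁻¹)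
  have hVlen1 : (toWord v).length = w.length + V₁.length := by
    rw [hV]; simp [invRev_length]
  have hVlen2 : (toWord v).length = V₂.length + w'.length := by
    rw [hV']; simp
  have hmeq : w.length = w'.length ∧ 2 * w.length = (toWord v).length := by omega
  have hsplit := append_inj (hV ▸ hV' : invRev w ++ V₁ = V₂ ++ w')
    (by rw [invRev_length]; omega)
  have e1 : invRev (toWord u) = invRev w ++ invRev U₁ := by rw [hU, invRev_append]
  have e2 : invRev (toWord u) = invRev V₁ ++ U₂ := by
    rw [← toWord_inv, hU', hsplit.2]
  have hVl : V₁.length = w.length := by omega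
  have hww' : invRev w = invRev V₁ :=
    (append_inj (e1.symm.trans e2) (by rw [invRev_length, invRev_length, hVl])).1
  have hww : w = V₁ := invRev_injective hww'
  rw [hww] at hV
  have hrd : Rd (invRev V₁ ++ V₁) := hV ▸ rd_toWord v
  have hV₁ne : V₁ ≠ [] := by
    intro h; rw [h] at hVl; simp at hVl; omega
  obtain ⟨t, V₁', rfl⟩ : ∃ t V₁', V₁ = t :: V₁' := by
    rcases V₁ with - | ⟨t, V₁'⟩
    · exact absurd rfl hV₁ne
    · exact ⟨t, V₁', rfl⟩
  have hjun := (List.isChain_append.mp hrd).2.2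
  apply hjun (neg t) _ t rfl
  · show cp (neg t) t
    simp [cp, neg]
  · rw [getLast?_invRev]
    rfl


/-- cyclically reduced word -/
def CRd (L : List (α × Bool)) : Prop :=
  Rd L ∧ ∀ s ∈ L.getLast?, ∀ t ∈ L.head?, ¬ cp s t

lemma crd_nil : CRd ([] : List (α × Bool)) := ⟨rd_nil, by simp⟩

lemma neg_neg' (s : α × Bool) : neg (neg s) = s := by simp [neg]

lemma mk_nil : mk ([] : List (α × Bool)) = 1 := FreeGroup.one_eq_mk.symm

lemma mk_cons (s : α × Bool) (L : List (α × Bool)) : mk (s :: L) = mk [s] * mk L := by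
  rw [mul_mk]; rfl

lemma mk_cancel_cons (s : α × Bool) (R : List (α × Bool)) :
    mk (s :: neg s :: R) = mk R := by
  have h : Red.Step (s :: neg s :: R) R := by
    have h2 : Red.Step (([] : List (α × Bool)) ++ (s.1, s.2) :: (s.1, !s.2) :: R) ([] ++ R) :=
      Red.Step.not
    simpa [neg] using h2
  rw [← quot_mk_eq_mk, ← quot_mk_eq_mk]
  exact Quot.sound h

lemma mk_inv_singleton (s : α × Bool) : (mk [s])⁻¹ = mk [neg s] := by
  rw [inv_mk, invRev_singleton]

lemma mk_singleton_cancel (s : α × Bool) : mk [s] * mk [neg s] = 1 := by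
  rw [mul_mk]
  show mk (s :: neg s :: []) = 1
  rw [mk_cancel_cons, mk_nil]

/-- rotating the first letter of a cyclically reduced word to the back -/
lemma crd_rotate {t : α × Bool} {C' : List (α × Bool)} (h : CRd (t :: C')) :
    CRd (C' ++ [t]) := by
  constructor
  · rw [Rd, List.isChain_append]
    refine ⟨h.1.tail, List.isChain_singleton _, ?_⟩
    intro x hx y hy
    obtain rfl : t = y := by simpa using hy
    rcases C' with - | ⟨c, C''⟩
    · simp at hx
    · have hx' : x ∈ (t :: c :: C'').getLast? := by rwa [List.getLast?_cons_cons]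
      exact h.2 x hx' t rfl
  · intro x hx y hy
    obtain rfl : t = x := by
      rw [List.getLast?_concat] at hx
      simpa using hx
    rcases C' with - | ⟨c, C''⟩
    · obtain rfl : t = y := by simpa using hy
      exact cp_self t
    · obtain rfl : c = y := by simpa using hy
      exact (List.isChain_cons_cons.mp h.1).1

/-- rotating the last letter of a cyclically reduced word to the front -/
lemma crd_rotate_back {e : α × Bool} {C₀ : List (α × Bool)} (h : CRd (C₀ ++ [e])) :
    CRd (e :: C₀) := by
  constructor
  · rw [Rd, List.isChain_cons]
    constructor
    · intro y hy
      rcases C₀ with - | ⟨c, C₁⟩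
      · simp at hy
      · obtain rfl : c = y := by simpa using hy
        exact h.2 e List.getLast?_concat c rfl
    · exact h.1.prefix ⟨[e], rfl⟩
  · intro x hx y hy
    obtain rfl : e = y := by simpa using hy
    rcases C₀ with - | ⟨c, C₁⟩
    · obtain rfl : e = x := by simpa using hx
      exact cp_self e
    · have hx' : x ∈ (c :: C₁).getLast? := by rwa [List.getLast?_cons_cons] at hx
      exact (List.isChain_append.mp h.1).2.2 x hx' e rfl

lemma conj_step (s : α × Bool) {g : FreeGroup α} {u C : List (α × Bool)}
    (hC : CRd C) (hCu : C = [] → u = []) (hrd : Rd (u ++ C ++ invRev u))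
    (helt : g = mk u * mk C * (mk u)⁻¹) :
    ∃ u' C', CRd C' ∧ C'.length = C.length ∧ (C' = [] → u' = []) ∧
      Rd (u' ++ C' ++ invRev u') ∧
      mk [s] * g * (mk [s])⁻¹ = mk u' * mk C' * (mk u')⁻¹ := by
  rcases u with - | ⟨t, u'⟩
  · -- u = []
    rcases C with - | ⟨t, C'⟩
    · -- C = []
      refine ⟨[], [], crd_nil, rfl, fun _ => rfl, by simpa [invRev] using rd_nil, ?_⟩
      rw [helt, mk_nil]
      group
    · by_cases hst : cp s t
      · -- front cancellation, cycle the first letter to the back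
        obtain rfl : t = neg s := eq_neg_of_cp hst
        refine ⟨[], C' ++ [neg s], crd_rotate hC, by simp, fun h => rfl, ?_, ?_⟩
        · simpa [invRev] using (crd_rotate hC).1
        · rw [helt, mk_nil]
          simp only [one_mul, inv_one, mul_one]
          rw [mk_cons (neg s) C', ← mul_assoc, mk_singleton_cancel, one_mul,
            mk_inv_singleton, mul_mk]
      · obtain ⟨C₀, e, hC0⟩ : ∃ C₀ e, t :: C' = C₀ ++ [e] := by
          rcases List.eq_nil_or_concat (t :: C') with h | ⟨C₀, e, h⟩
          · simp at h
          · exact ⟨C₀, e, by simpa [List.concat_eq_append] using h⟩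
        by_cases hes : e = s
        · -- back cancellation, cycle the last letter to the front
          rw [hes] at hC0
          rw [hC0] at hC helt
          refine ⟨[], s :: C₀, crd_rotate_back hC, by rw [hC0]; simp, fun h => rfl, ?_, ?_⟩
          · simpa [invRev] using (crd_rotate_back hC).1
          · rw [helt, mk_nil]
            simp only [one_mul, inv_one, mul_one]
            rw [mk_inv_singleton, mul_mk, mul_mk]
            rw [show ([s] ++ (C₀ ++ [s]) ++ [neg s] : List (α × Bool))
              = (s :: C₀) ++ (s :: neg s :: []) by simp]
            rw [← mul_mk, mk_cancel_cons, mk_nil, mul_one]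
        · -- no cancellation at either end
          refine ⟨[s], t :: C', hC, rfl, by simp, ?_, ?_⟩
          · rw [invRev_singleton]
            rw [show ([s] ++ (t :: C') ++ [neg s] : List (α × Bool))
              = [s] ++ ((t :: C') ++ [neg s]) by simp]
            rw [Rd, List.isChain_append]
            refine ⟨List.isChain_singleton _, ?_, ?_⟩
            · rw [List.isChain_append]
              refine ⟨hC.1, List.isChain_singleton _, ?_⟩
              intro x hx y hy
              obtain rfl : neg s = y := by simpa using hy
              intro hcp
              apply hes
              have h2 : s = x := by
                have h1 := congrArg neg (eq_neg_of_cp hcp)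
                rwa [neg_neg', neg_neg'] at h1
              have hx' : x = e := by
                rw [hC0, List.getLast?_concat] at hx
                simpa using hx.symm
              rw [← hx', ← h2]
            · intro x hx y hy
              obtain rfl : s = x := by simpa using hx
              obtain rfl : t = y := by
                have he : ((t :: C') ++ [neg s]).head? = some t := rfl
                rw [he] at hy
                simpa using hy
              exact hst
          · rw [helt, mk_nil]
            group
  · -- u = t :: u'
    have hCne : C ≠ [] := fun h => by simpa using hCu h
    by_cases hst : cp s t
    · obtain rfl : t = neg s := eq_neg_of_cp hst
      refine ⟨u', C, hC, rfl, fun h => absurd h hCne, ?_, ?_⟩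
      · have heq : (neg s :: u') ++ C ++ invRev (neg s :: u')
            = [neg s] ++ (u' ++ C ++ invRev u') ++ [neg (neg s)] := by
          rw [invRev_cons]
          simp [List.append_assoc]
        exact hrd.infix ⟨[neg s], [neg (neg s)], by rw [← heq]⟩
      · have e1 : mk [s] * mk (neg s :: u') = mk u' := by
          rw [mul_mk]
          show mk (s :: neg s :: u') = mk u'
          exact mk_cancel_cons s u'
        rw [helt]
        calc mk [s] * (mk (neg s :: u') * mk C * (mk (neg s :: u'))⁻¹) * (mk [s])⁻¹
            = (mk [s] * mk (neg s :: u')) * mk C * (mk [s] * mk (neg s :: u'))⁻¹ := by group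
          _ = mk u' * mk C * (mk u')⁻¹ := by rw [e1]
    · refine ⟨s :: t :: u', C, hC, rfl, fun h => absurd h hCne, ?_, ?_⟩
      · have heq : (s :: t :: u') ++ C ++ invRev (s :: t :: u')
            = [s] ++ (((t :: u') ++ C ++ invRev (t :: u')) ++ [neg s]) := by
          rw [show invRev (s :: t :: u') = invRev (t :: u') ++ [neg s] from invRev_cons s (t :: u')]
          simp [List.append_assoc]
        rw [heq, Rd, List.isChain_append]
        refine ⟨List.isChain_singleton _, ?_, ?_⟩
        · rw [List.isChain_append]
          refine ⟨hrd, List.isChain_singleton _, ?_⟩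
          intro x hx y hy
          obtain rfl : neg s = y := by simpa using hy
          have hx' : x = neg t := by
            rw [List.getLast?_append, List.getLast?_append] at hx
            rw [invRev_cons, List.getLast?_concat] at hx
            simpa using hx.symm
          rw [hx', cp_neg_neg]
          exact hst
        · intro x hx y hy
          obtain rfl : s = x := by simpa using hx
          obtain rfl : t = y := by
            have he : (((t :: u') ++ C ++ invRev (t :: u')) ++ [neg s]).head? = some t := rfl
            rw [he] at hy
            simpa using hy
          exact hst
      · rw [helt, mk_cons s (t :: u')]
        group


lemma conj_aux {g : FreeGroup α} (hg : CRd (toWord g)) :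
    ∀ H : List (α × Bool), ∃ u C : List (α × Bool), CRd C ∧ C.length = (toWord g).length ∧
      (C = [] → u = []) ∧ Rd (u ++ C ++ invRev u) ∧
      mk H * g * (mk H)⁻¹ = mk u * mk C * (mk u)⁻¹ := by
  intro H
  induction H with
  | nil =>
    refine ⟨[], toWord g, hg, rfl, fun _ => rfl, by simpa [invRev] using hg.1, ?_⟩
    rw [mk_nil, mk_toWord]
  | cons s H' ih =>
    obtain ⟨u, C, h1, h2, h3, h4, h5⟩ := ih
    obtain ⟨u', C', g1, g2, g3, g4, g5⟩ := conj_step s h1 h3 h4 h5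
    refine ⟨u', C', g1, g2.trans h2, g3, g4, ?_⟩
    calc mk (s :: H') * g * (mk (s :: H'))⁻¹
        = mk [s] * (mk H' * g * (mk H')⁻¹) * (mk [s])⁻¹ := by
          rw [mk_cons s H']; group
      _ = mk u' * mk C' * (mk u')⁻¹ := g5

/-- conjugates of a cyclically reduced element are at least as long -/
lemma conj_len_ge {g : FreeGroup α} (hg : CRd (toWord g)) (h : FreeGroup α) :
    (toWord g).length ≤ (toWord (h * g * h⁻¹)).length := by
  obtain ⟨u, C, h1, h2, h3, h4, h5⟩ := conj_aux hg (toWord h)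
  rw [mk_toWord] at h5
  have he : h * g * h⁻¹ = mk (u ++ C ++ invRev u) := by
    rw [h5, ← mul_mk, ← mul_mk, inv_mk]
  rw [he, toWord_mk_rd h4]
  simp only [List.length_append, invRev_length]
  omega

/-- the `m`-fold concatenation of a word -/
def powWord (L : List (α × Bool)) (m : ℕ) : List (α × Bool) := (List.replicate m L).flatten

lemma powWord_zero (L : List (α × Bool)) : powWord L 0 = [] := rfl

lemma powWord_succ (L : List (α × Bool)) (m : ℕ) :
    powWord L (m + 1) = L ++ powWord L m := by
  simp [powWord, List.replicate_succ]

lemma powWord_length (L : List (α × Bool)) (m : ℕ) :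
    (powWord L m).length = m * L.length := by
  induction m with
  | zero => simp [powWord_zero]
  | succ m ih => rw [powWord_succ, List.length_append, ih]; ring

lemma powWord_head (L : List (α × Bool)) (m : ℕ) :
    (powWord L m).head? = none ∨ (powWord L m).head? = L.head? := by
  induction m with
  | zero => left; rfl
  | succ m ih =>
    rw [powWord_succ, List.head?_append]
    rcases hL : L.head? with - | a
    · simp only [Option.none_or]
      rcases ih with h | h
      · left; exact h
      · right; rw [h, hL]
    · right; simp

lemma powWord_getLast (L : List (α × Bool)) (m : ℕ) :
    (powWord L m).getLast? = none ∨ (powWord L m).getLast? = L.getLast? := by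
  induction m with
  | zero => left; rfl
  | succ m ih =>
    rw [powWord_succ, List.getLast?_append]
    rcases ih with h | h
    · rw [h]; right; simp
    · rw [h]
      rcases hL : L.getLast? with - | a
      · left; simp
      · right; simp

lemma mk_powWord (L : List (α × Bool)) (m : ℕ) : (mk L) ^ m = mk (powWord L m) := by
  induction m with
  | zero => rw [pow_zero, powWord_zero, mk_nil]
  | succ m ih => rw [pow_succ', ih, mul_mk, powWord_succ]

lemma crd_powWord {L : List (α × Bool)} (hL : CRd L) (m : ℕ) : CRd (powWord L m) := by
  induction m with
  | zero => exact crd_nil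
  | succ m ih =>
    rw [powWord_succ]
    constructor
    · rw [Rd, List.isChain_append]
      refine ⟨hL.1, ih.1, ?_⟩
      intro x hx y hy
      rcases powWord_head L m with h | h
      · rw [h] at hy; simp at hy
      · rw [h] at hy; exact hL.2 x hx y hy
    · intro x hx y hy
      rw [List.getLast?_append] at hx
      rw [List.head?_append] at hy
      have hy' : y ∈ L.head? := by
        rcases hL' : L.head? with - | a
        · exfalso
          have hLnil : L = [] := List.head?_eq_none_iff.mp hL'
          subst hLnil
          have hpw : powWord ([] : List (α × Bool)) m = [] :=
            List.length_eq_zero_iff.mp (by rw [powWord_length]; simp)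
          simp [hpw] at hy
        · rw [hL'] at hy
          simpa using hy
      have hx' : x ∈ L.getLast? := by
        rcases powWord_getLast L m with h | h
        · rw [h] at hx; simpa using hx
        · rw [h] at hx
          rcases hL' : L.getLast? with - | a
          · rw [hL'] at hx; simpa using hx
          · rw [hL'] at hx; simpa using hx
      exact hL.2 x hx' y hy'

lemma crd_invRev {L : List (α × Bool)} (h : CRd L) : CRd (invRev L) := by
  refine ⟨rd_invRev h.1, ?_⟩
  intro x hx y hy
  rw [getLast?_invRev] at hx
  rw [head?_invRev] at hy
  obtain ⟨t, ht, rfl⟩ : ∃ t, t ∈ L.head? ∧ x = neg t := by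
    rcases hL : L.head? with - | a
    · rw [hL] at hx; simp at hx
    · rw [hL] at hx; exact ⟨a, rfl, by simpa using hx.symm⟩
  obtain ⟨u, hu, rfl⟩ : ∃ u, u ∈ L.getLast? ∧ y = neg u := by
    rcases hL : L.getLast? with - | a
    · rw [hL] at hy; simp at hy
    · rw [hL] at hy; exact ⟨a, rfl, by simpa using hy.symm⟩
  rw [cp_neg_neg]
  exact h.2 u hu t ht


section Glue

variable {β : Type*}

/-- the element of the free group represented by one letter over the alphabet `β × Bool` -/
def zz (f : β → FreeGroup α) (p : β × Bool) : FreeGroup α :=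
  bif p.2 then f p.1 else (f p.1)⁻¹

/-- the reduced word of `zz f p` -/
def ZW (f : β → FreeGroup α) (p : β × Bool) : List (α × Bool) := toWord (zz f p)

lemma mk_append_split (X Y : List (α × Bool)) : mk (X ++ Y) = mk X * mk Y := mul_mk.symm

lemma glue_aux (f : β → FreeGroup α)
    (HS : ∀ p q : β × Bool, ¬ cp p q → canc (ZW f p) (ZW f q) < (ZW f q).length)
    (HND : ∀ p q r : β × Bool, ¬ cp p q → ¬ cp q r →
      canc (ZW f p) (ZW f q) + canc (ZW f q) (ZW f r) < (ZW f q).length) :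
    ∀ (T : List (β × Bool)) (p : β × Bool) (A : List (α × Bool)) (c : ℕ),
      List.Chain' (fun s t => ¬ cp s t) (p :: T) →
      (∀ q, ¬ cp p q → c + canc (ZW f p) (ZW f q) < (ZW f p).length) →
      c < (ZW f p).length →
      Rd (A ++ (ZW f p).drop c) →
      ∃ W, Rd W ∧ mk (A ++ (ZW f p).drop c) * (T.map (zz f)).prod = mk W ∧
        A.length + 1 + T.length ≤ W.length := by
  intro T
  induction T with
  | nil =>
    intro p A c _ _ hc0 hrd
    refine ⟨A ++ (ZW f p).drop c, hrd, by simp, ?_⟩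
    simp only [List.length_append, List.length_drop, List.length_nil]
    omega
  | cons q T' ih =>
    intro p A c hch hc hc0 hrd
    have hlegal : ¬ cp p q := (List.isChain_cons_cons.mp hch).1
    have hch' : List.Chain' (fun s t => ¬ cp s t) (q :: T') := (List.isChain_cons_cons.mp hch).2
    obtain ⟨P₁, w, Q₁, hP, hQ, hw⟩ := mt_canc (ZW f p) (ZW f q)
    have hlP : (ZW f p).length = P₁.length + canc (ZW f p) (ZW f q) := by
      have h := congrArg List.length hP
      rwa [List.length_append, hw] at h
    have hlQ : (ZW f q).length = canc (ZW f p) (ZW f q) + Q₁.length := by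
      have h := congrArg List.length hQ
      rwa [List.length_append, invRev_length, hw] at h
    have hck : c + canc (ZW f p) (ZW f q) < (ZW f p).length := hc q hlegal
    have hcP1 : c < P₁.length := by omega
    have hkQ : canc (ZW f p) (ZW f q) < (ZW f q).length := HS p q hlegal
    have hD : (ZW f p).drop c = P₁.drop c ++ w := by
      rw [hP, List.drop_append_of_le_length (by omega)]
    have hQ1 : (ZW f q).drop (canc (ZW f p) (ZW f q)) = Q₁ := by
      have h : (invRev w ++ Q₁).drop w.length = Q₁ := List.drop_left' (by rw [invRev_length])
      rw [hw] at h
      rwa [← hQ] at h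
    have hQ1ne : Q₁ ≠ [] := by
      intro h; rw [h] at hlQ; simp at hlQ; omega
    have hPdne : P₁.drop c ≠ [] := by
      intro h
      have h2 := List.length_drop (i := c) (l := P₁)
      rw [h] at h2; simp at h2; omega
    -- algebra : absorb the next letter
    have halg : mk (A ++ (ZW f p).drop c) * zz f q = mk ((A ++ P₁.drop c) ++ Q₁) := by
      have h1 : zz f q = mk (invRev w ++ Q₁) := by rw [← hQ, ZW, mk_toWord]
      rw [h1, hD, mk_append_split, mk_append_split, mk_append_split, mk_append_split,
        mk_append_split, ← inv_mk]
      group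
    -- reducedness of the new accumulated word
    have hrd' : Rd ((A ++ P₁.drop c) ++ Q₁) := by
      rw [Rd, List.isChain_append]
      refine ⟨hrd.prefix ⟨w, by rw [hD, List.append_assoc]⟩,
        (rd_toWord (zz f q)).suffix ⟨invRev w, hQ.symm⟩, ?_⟩
      intro x hx y hy
      have hx' : x ∈ P₁.getLast? := by
        rw [List.getLast?_append_of_ne_nil _ hPdne] at hx
        have e1 : (P₁.drop c).getLast? = P₁.getLast? := by
          conv_rhs => rw [← List.take_append_drop c P₁]
          rw [List.getLast?_append_of_ne_nil _ hPdne]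
        rwa [e1] at hx
      intro hcp
      have hP₁ne : P₁ ≠ [] := by
        intro h; rw [h] at hcP1; simp at hcP1
      obtain ⟨P₀, hP₀⟩ : ∃ P₀, P₁ = P₀ ++ [x] := by
        refine ⟨P₁.dropLast, ?_⟩
        rw [List.getLast?_eq_getLast hP₁ne] at hx'
        obtain rfl : P₁.getLast hP₁ne = x := by simpa using hx'
        exact (List.dropLast_append_getLast hP₁ne).symm
      obtain ⟨Q', hQ'⟩ : ∃ Q', Q₁ = y :: Q' := by
        rcases Q₁ with - | ⟨y', Q'⟩
        · exact absurd rfl hQ1ne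
        · obtain rfl : y' = y := by simpa using hy
          exact ⟨Q', rfl⟩
      exact canc_junction (hP₀ ▸ hP) (hQ' ▸ hQ) hw hcp
    -- new invariants for q
    have hcq : ∀ r, ¬ cp q r → canc (ZW f p) (ZW f q) + canc (ZW f q) (ZW f r) < (ZW f q).length :=
      fun r hr => HND p q r hlegal hr
    obtain ⟨W, hWrd, hWeq, hWlen⟩ := ih q (A ++ P₁.drop c) (canc (ZW f p) (ZW f q)) hch' hcq hkQ
      (by rw [hQ1]; exact hrd')
    refine ⟨W, hWrd, ?_, ?_⟩
    · rw [List.map_cons, List.prod_cons, ← mul_assoc, halg, ← hWeq, hQ1]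
    · have h2 : (A ++ P₁.drop c).length = A.length + (P₁.length - c) := by
        simp [List.length_drop]
      simp only [List.length_cons]
      omega

/-- the main counting lemma : an element of a subgroup generated by elements
satisfying the small-cancellation style conditions is at least as long as the
word over the generators expressing it -/
lemma glue_main (f : β → FreeGroup α) (hf : ∀ b, f b ≠ 1)
    (HS : ∀ p q : β × Bool, ¬ cp p q → canc (ZW f p) (ZW f q) < (ZW f q).length)
    (HS' : ∀ p q : β × Bool, ¬ cp p q → canc (ZW f p) (ZW f q) < (ZW f p).length)
    (HND : ∀ p q r : β × Bool, ¬ cp p q → ¬ cp q r →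
      canc (ZW f p) (ZW f q) + canc (ZW f q) (ZW f r) < (ZW f q).length)
    (L : List (β × Bool)) (hL : List.Chain' (fun s t => ¬ cp s t) L) (hne : L ≠ []) :
    L.length ≤ (toWord (FreeGroup.lift f (mk L))).length := by
  rcases L with - | ⟨p, T⟩
  · exact absurd rfl hne
  have hzz : ∀ b, zz f b ≠ 1 := by
    intro b
    rcases b with ⟨i, bb⟩
    cases bb
    · simp only [zz, cond_false, ne_eq, inv_eq_one]
      exact hf i
    · simp only [zz, cond_true]
      exact hf i
  have hlen : 0 < (ZW f p).length := by
    rw [ZW]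
    by_contra h
    push_neg at h
    interval_cases h2 : (toWord (zz f p)).length
    exact hzz p (toWord_eq_nil_iff.mp (List.length_eq_zero_iff.mp h2))
  obtain ⟨W, hWrd, hWeq, hWlen⟩ := glue_aux f HS HND T p [] 0 hL
    (fun q hq => by simpa using HS' p q hq) hlen (by simpa [ZW] using rd_toWord (zz f p))
  have heval : FreeGroup.lift f (mk (p :: T)) = mk W := by
    rw [FreeGroup.lift_mk, List.map_cons, List.prod_cons]
    have h0 : (bif p.2 then f p.1 else (f p.1)⁻¹) = zz f p := rfl
    have h1 : zz f p = mk (([] : List (α × Bool)) ++ (ZW f p).drop 0) := by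
      simp [ZW, mk_toWord]
    rw [h0, h1, ← hWeq]
    rfl
  rw [heval, toWord_mk_rd hWrd]
  simp only [List.length_cons]
  omega

end Glue




end NPf

/-- The generator `a` of `F₂ = F(a,b)`. -/
def genA : FreeGroup (Fin 2) := FreeGroup.of 0

/-- The generator `b` of `F₂ = F(a,b)`. -/
def genB : FreeGroup (Fin 2) := FreeGroup.of 1

/-- The cyclically reduced length of an element of `F₂` with respect to the basis `{a,b}`:
the minimum of the word lengths of its conjugates. -/
noncomputable def cyclen (g : FreeGroup (Fin 2)) : ℕ :=
  sInf {n : ℕ | ∃ h : FreeGroup (Fin 2), (FreeGroup.toWord (h * g * h⁻¹)).length = n}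

/-- The endomorphism of `F₂` with `a ↦ a`, `b ↦ a b`. -/
def psiHom : FreeGroup (Fin 2) →* FreeGroup (Fin 2) :=
  FreeGroup.lift (fun i => if i = 0 then genA else genA * genB)

/-- The endomorphism of `F₂` with `a ↦ a`, `b ↦ a⁻¹ b`. -/
def psiInvHom : FreeGroup (Fin 2) →* FreeGroup (Fin 2) :=
  FreeGroup.lift (fun i => if i = 0 then genA else genA⁻¹ * genB)

lemma psiInvHom_comp_psiHom : psiInvHom.comp psiHom = MonoidHom.id (FreeGroup (Fin 2)) := by
  refine FreeGroup.ext_hom _ _ fun i => ?_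
  fin_cases i <;> simp [psiHom, psiInvHom, genA, genB]

lemma psiHom_comp_psiInvHom : psiHom.comp psiInvHom = MonoidHom.id (FreeGroup (Fin 2)) := by
  refine FreeGroup.ext_hom _ _ fun i => ?_
  fin_cases i <;> simp [psiHom, psiInvHom, genA, genB]

/-- The automorphism `ψ` of `F₂` with `ψ(a) = a`, `ψ(b) = ab`, carrying the basis `{a,b}`
to the basis `{a, ab}`. -/
def psiAut : MulAut (FreeGroup (Fin 2)) :=
  MonoidHom.toMulEquiv psiHom psiInvHom psiInvHom_comp_psiHom psiHom_comp_psiInvHom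

/-- The cyclically reduced length with respect to the free basis `{a, ab}`,
namely `‖g‖_B = ‖ψ⁻¹(g)‖_A`. -/
noncomputable def cyclenB (g : FreeGroup (Fin 2)) : ℕ := cyclen (psiAut.symm g)

open scoped commutatorElement

namespace NPf

open FreeGroup Subgroup List

abbrev F2 := FreeGroup (Fin 2)

lemma len_mk_le (L : List (Fin 2 × Bool)) : (toWord (mk L)).length ≤ L.length :=
  FreeGroup.norm_mk_le

/-- the target property : being conjugate to the standard commutator or its inverse -/
def Pc (z : F2) : Prop :=
  ∃ w : F2, z = w * ⁅genA, genB⁆ * w⁻¹ ∨ z = w * ⁅genA, genB⁆⁻¹ * w⁻¹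

lemma Pc_conj {z : F2} (h : Pc z) (g : F2) : Pc (g * z * g⁻¹) := by
  obtain ⟨w, h | h⟩ := h
  · exact ⟨g * w, Or.inl (by rw [h]; group)⟩
  · exact ⟨g * w, Or.inr (by rw [h]; group)⟩

lemma Pc_inv {z : F2} (h : Pc z) : Pc z⁻¹ := by
  obtain ⟨w, h | h⟩ := h
  · exact ⟨w, Or.inr (by rw [h]; group)⟩
  · exact ⟨w, Or.inl (by rw [h]; group)⟩

lemma Pc_transport {z z' : F2} (h : Pc z) (g : F2)
    (he : z' = g * z * g⁻¹ ∨ z' = g * z⁻¹ * g⁻¹) : Pc z' := by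
  rcases he with rfl | rfl
  · exact Pc_conj h g
  · exact Pc_conj (Pc_inv h) g

lemma cl_pair_le {a b : F2} {H : Subgroup F2} (ha : a ∈ H) (hb : b ∈ H) :
    closure ({a, b} : Set F2) ≤ H := by
  rw [closure_le]
  intro z hz
  rcases hz with rfl | hz
  · exact ha
  · rw [Set.mem_singleton_iff] at hz
    subst hz
    exact hb

lemma mem_cl_left (a b : F2) : a ∈ closure ({a, b} : Set F2) :=
  subset_closure (by left; rfl)

lemma mem_cl_right (a b : F2) : b ∈ closure ({a, b} : Set F2) :=
  subset_closure (by right; rfl)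

lemma cl_top {x y a b : F2} (hcl : closure ({x, y} : Set F2) = ⊤)
    (hx : x ∈ closure ({a, b} : Set F2)) (hy : y ∈ closure ({a, b} : Set F2)) :
    closure ({a, b} : Set F2) = ⊤ := by
  rw [eq_top_iff, ← hcl]
  exact cl_pair_le hx hy

lemma cl_conj {v u : F2} (g : F2) (hcl : closure ({v, u} : Set F2) = ⊤) :
    closure ({g * v * g⁻¹, g * u * g⁻¹} : Set F2) = ⊤ := by
  have h1 : ({g * v * g⁻¹, g * u * g⁻¹} : Set F2) = (MulAut.conj g).toMonoidHom '' {v, u} := by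
    rw [Set.image_pair]
    simp [MulAut.conj_apply]
  rw [h1, ← MonoidHom.map_closure, hcl]
  exact Subgroup.map_top_of_surjective _ (MulAut.conj g).surjective

lemma not_top_of_one (y : F2) : closure ({(1 : F2), y} : Set F2) ≠ ⊤ := by
  intro h
  have h1 : closure ({(1 : F2), y} : Set F2) ≤ closure {y} :=
    cl_pair_le (one_mem _) (subset_closure rfl)
  have hA : genA ∈ closure ({y} : Set F2) := h1 (h ▸ mem_top genA)
  have hB : genB ∈ closure ({y} : Set F2) := h1 (h ▸ mem_top genB)
  obtain ⟨m, hm⟩ := Subgroup.mem_closure_singleton.mp hA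
  obtain ⟨k, hk⟩ := Subgroup.mem_closure_singleton.mp hB
  have hcomm : genA * genB = genB * genA := by
    rw [← hm, ← hk, ← zpow_add, ← zpow_add, add_comm]
  exact (by decide : genA * genB ≠ genB * genA) hcomm

/-- pathology descent : if the smaller element dies between two copies of the other,
a composite Nielsen move strictly decreases the total length -/
lemma descent {u v : F2} (hv1 : v ≠ 1)
    (hb2 : 2 * canc (toWord v) (toWord u) ≤ (toWord v).length)
    (hb3 : 2 * canc (toWord u) (toWord v) ≤ (toWord u).length)
    (hdeath : (toWord v).length ≤ canc (toWord u) (toWord v) + canc (toWord v) (toWord u))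
    (hb1 : 2 * canc (toWord u) (toWord v) ≤ (toWord v).length)
    (hcl : closure ({v, u} : Set F2) = ⊤)
    (IH : ∀ x' y' : F2,
      (toWord x').length + (toWord y').length < (toWord v).length + (toWord u).length →
      closure ({x', y'} : Set F2) = ⊤ → Pc ⁅x', y'⁆) :
    Pc ⁅v, u⁆ := by
  have hVne : toWord v ≠ [] := fun h => hv1 (toWord_eq_nil_iff.mp h)
  have hVpos : 0 < (toWord v).length := List.length_pos_iff.mpr hVne
  obtain ⟨U₁, w, V₁, hU, hV, hw⟩ := mt_canc (toWord u) (toWord v)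
  obtain ⟨V₂, w', U₂, hV', hU', hw'⟩ := mt_canc (toWord v) (toWord u)
  have l1 := congrArg List.length hV
  rw [List.length_append, invRev_length] at l1
  have l2 := congrArg List.length hV'
  rw [List.length_append] at l2
  have l3 := congrArg List.length hU
  rw [List.length_append] at l3
  have l4 := congrArg List.length hU'
  rw [List.length_append, invRev_length] at l4
  have hsplit := List.append_inj (hV.symm.trans hV') (by rw [invRev_length]; omega)
  have hm1 : 1 ≤ canc (toWord u) (toWord v) := by omega
  -- decompose U both ways
  have e0 : invRev V₁ ++ U₂ = U₁ ++ w := by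
    rw [hsplit.2, ← hU']
    exact hU
  have hc2 : canc (toWord u) (toWord v) ≤ U₁.length := by omega
  have hlV1 : V₁.length = canc (toWord u) (toWord v) := by omega
  have htake : U₁.take (canc (toWord u) (toWord v)) = invRev V₁ := by
    have t1 : (invRev V₁ ++ U₂).take (canc (toWord u) (toWord v)) = invRev V₁ :=
      List.take_left' (by rw [invRev_length, hlV1])
    rw [e0] at t1
    rwa [List.take_append_of_le_length hc2] at t1
  set YY := U₁.drop (canc (toWord u) (toWord v)) with hYY
  have hU1 : U₁ = invRev V₁ ++ YY := by
    rw [← htake, hYY, List.take_append_drop]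
  have hU2 : U₂ = YY ++ w := by
    apply List.append_cancel_left (as := invRev V₁)
    rw [e0, hU1, List.append_assoc]
  -- the conjugating element
  set g0 : F2 := (mk (invRev w))⁻¹ with hg0
  have hg0w : g0 = mk w := by rw [hg0, inv_mk, invRev_invRev]
  have hvmk : v = mk (invRev w ++ V₁) := by rw [← hV, mk_toWord]
  have humk : u = mk (invRev V₁ ++ (YY ++ w)) := by
    rw [← hU2, hsplit.2, ← hU', mk_toWord]
  have ha' : g0 * v * g0⁻¹ = mk (V₁ ++ invRev w) := by
    rw [hg0, hvmk, mk_append_split (invRev w) V₁, mk_append_split V₁ (invRev w), ← inv_mk]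
    group
  have hb' : g0 * (v * u) * g0⁻¹ = mk YY := by
    rw [hg0, hvmk, humk, mk_append_split (invRev w) V₁,
      mk_append_split (invRev V₁) (YY ++ w), mk_append_split YY w, ← inv_mk, ← inv_mk]
    group
  have hlen_a : (toWord (g0 * v * g0⁻¹)).length ≤ 2 * canc (toWord u) (toWord v) := by
    rw [ha']
    calc (toWord (mk (V₁ ++ invRev w))).length ≤ (V₁ ++ invRev w).length := len_mk_le _
      _ = 2 * canc (toWord u) (toWord v) := by
          rw [List.length_append, invRev_length]; omega
  have hlYY : YY.length = U₁.length - canc (toWord u) (toWord v) := by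
    rw [hYY, List.length_drop]
  have hlen_b : (toWord (g0 * (v * u) * g0⁻¹)).length
      ≤ (toWord u).length - 2 * canc (toWord u) (toWord v) := by
    rw [hb']
    calc (toWord (mk YY)).length ≤ YY.length := len_mk_le _
      _ ≤ _ := by omega
  have hcl1 : closure ({v, v * u} : Set F2) = ⊤ := by
    refine cl_top hcl (mem_cl_left _ _) ?_
    simpa using mul_mem (inv_mem (mem_cl_left v (v * u))) (mem_cl_right v (v * u))
  have hcl2 : closure ({g0 * v * g0⁻¹, g0 * (v * u) * g0⁻¹} : Set F2) = ⊤ := cl_conj g0 hcl1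
  have hsum : (toWord (g0 * v * g0⁻¹)).length + (toWord (g0 * (v * u) * g0⁻¹)).length
      < (toWord v).length + (toWord u).length := by omega
  have hP := IH _ _ hsum hcl2
  have hP1 : Pc ⁅v, v * u⁆ :=
    Pc_transport hP g0⁻¹ (Or.inl (by simp only [commutatorElement_def]; group))
  exact Pc_transport hP1 v⁻¹ (Or.inl (by simp only [commutatorElement_def]; group))

/-- the generating function sending `0 ↦ x`, `1 ↦ y` -/
def fgen (x y : F2) : Fin 2 → F2 := fun i => if i = 0 then x else y

/-- every generating pair of `F₂` has commutator conjugate to `⁅a,b⁆^{±1}` -/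
lemma nielsen_pair : ∀ (n : ℕ) (x y : F2),
    (toWord x).length + (toWord y).length ≤ n →
    closure ({x, y} : Set F2) = ⊤ → Pc ⁅x, y⁆ := by
  intro n
  induction n with
  | zero =>
    intro x y hlen hcl
    have hx : x = 1 := toWord_eq_nil_iff.mp (List.length_eq_zero_iff.mp (by omega))
    exact absurd (hx ▸ hcl) (not_top_of_one y)
  | succ n IH =>
    intro x y hlen hcl
    by_cases hx1 : x = 1
    · exact absurd (hx1 ▸ hcl) (not_top_of_one y)
    by_cases hy1 : y = 1
    · rw [Set.pair_comm] at hcl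
      exact absurd (hy1 ▸ hcl) (not_top_of_one x)
    by_cases h1 : (toWord (x * y)).length < (toWord x).length
    · have hcl' : closure ({x * y, y} : Set F2) = ⊤ := by
        refine cl_top hcl ?_ (mem_cl_right _ _)
        simpa using mul_mem (mem_cl_left (x * y) y) (inv_mem (mem_cl_right (x * y) y))
      have hP := IH (x * y) y (by omega) hcl'
      have he : ⁅x * y, y⁆ = ⁅x, y⁆ := by simp only [commutatorElement_def]; group
      rwa [he] at hP
    by_cases h2 : (toWord (x * y⁻¹)).length < (toWord x).length
    · have hcl' : closure ({x * y⁻¹, y} : Set F2) = ⊤ := by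
        refine cl_top hcl ?_ (mem_cl_right _ _)
        simpa using mul_mem (mem_cl_left (x * y⁻¹) y) (mem_cl_right (x * y⁻¹) y)
      have hP := IH (x * y⁻¹) y (by omega) hcl'
      have he : ⁅x * y⁻¹, y⁆ = ⁅x, y⁆ := by simp only [commutatorElement_def]; group
      rwa [he] at hP
    by_cases h3 : (toWord (y * x)).length < (toWord x).length
    · have hcl' : closure ({y * x, y} : Set F2) = ⊤ := by
        refine cl_top hcl ?_ (mem_cl_right _ _)
        simpa using mul_mem (inv_mem (mem_cl_right (y * x) y)) (mem_cl_left (y * x) y)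
      have hP := IH (y * x) y (by omega) hcl'
      exact Pc_transport hP y⁻¹ (Or.inl (by simp only [commutatorElement_def]; group))
    by_cases h4 : (toWord (y⁻¹ * x)).length < (toWord x).length
    · have hcl' : closure ({y⁻¹ * x, y} : Set F2) = ⊤ := by
        refine cl_top hcl ?_ (mem_cl_right _ _)
        simpa using mul_mem (mem_cl_right (y⁻¹ * x) y) (mem_cl_left (y⁻¹ * x) y)
      have hP := IH (y⁻¹ * x) y (by omega) hcl'
      exact Pc_transport hP y (Or.inl (by simp only [commutatorElement_def]; group))
    by_cases h5 : (toWord (x * y)).length < (toWord y).length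
    · have hcl' : closure ({x, x * y} : Set F2) = ⊤ := by
        refine cl_top hcl (mem_cl_left _ _) ?_
        simpa using mul_mem (inv_mem (mem_cl_left x (x * y))) (mem_cl_right x (x * y))
      have hP := IH x (x * y) (by omega) hcl'
      exact Pc_transport hP x⁻¹ (Or.inl (by simp only [commutatorElement_def]; group))
    by_cases h6 : (toWord (y * x)).length < (toWord y).length
    · have hcl' : closure ({x, y * x} : Set F2) = ⊤ := by
        refine cl_top hcl (mem_cl_left _ _) ?_
        simpa using mul_mem (mem_cl_right x (y * x)) (inv_mem (mem_cl_left x (y * x)))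
      have hP := IH x (y * x) (by omega) hcl'
      have he : ⁅x, y * x⁆ = ⁅x, y⁆ := by simp only [commutatorElement_def]; group
      rwa [he] at hP
    by_cases h7 : (toWord (x⁻¹ * y)).length < (toWord y).length
    · have hcl' : closure ({x, x⁻¹ * y} : Set F2) = ⊤ := by
        refine cl_top hcl (mem_cl_left _ _) ?_
        simpa using mul_mem (mem_cl_left x (x⁻¹ * y)) (mem_cl_right x (x⁻¹ * y))
      have hP := IH x (x⁻¹ * y) (by omega) hcl'
      exact Pc_transport hP x (Or.inl (by simp only [commutatorElement_def]; group))
    by_cases h8 : (toWord (y * x⁻¹)).length < (toWord y).length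
    · have hcl' : closure ({x, y * x⁻¹} : Set F2) = ⊤ := by
        refine cl_top hcl (mem_cl_left _ _) ?_
        simpa using mul_mem (mem_cl_right x (y * x⁻¹)) (mem_cl_left x (y * x⁻¹))
      have hP := IH x (y * x⁻¹) (by omega) hcl'
      have he : ⁅x, y * x⁻¹⁆ = ⁅x, y⁆ := by simp only [commutatorElement_def]; group
      rwa [he] at hP
    -- stuck case
    push_neg at h1 h2 h3 h4 h5 h6 h7 h8
    have key : ∀ u v : F2, (toWord u).length ≤ (toWord (u * v)).length →
        (toWord v).length ≤ (toWord (u * v)).length →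
        2 * canc (toWord u) (toWord v) ≤ min (toWord u).length (toWord v).length := by
      intro u v hu hv
      have := len_mul u v
      omega
    have hmix : ∀ u v : F2,
        (((x = u ∨ x⁻¹ = u) ∧ (y = v ∨ y⁻¹ = v)) ∨ ((y = u ∨ y⁻¹ = u) ∧ (x = v ∨ x⁻¹ = v))) →
        2 * canc (toWord u) (toWord v) ≤ min (toWord u).length (toWord v).length := by
      rintro u v (⟨(rfl | rfl), (rfl | rfl)⟩ | ⟨(rfl | rfl), (rfl | rfl)⟩)
      · exact key x y h1 h5
      · refine key x y⁻¹ h2 ?_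
        rw [len_inv, show x * y⁻¹ = (y * x⁻¹)⁻¹ by group, len_inv]
        exact h8
      · refine key x⁻¹ y ?_ h7
        rw [len_inv, show x⁻¹ * y = (y⁻¹ * x)⁻¹ by group, len_inv]
        exact h4
      · refine key x⁻¹ y⁻¹ ?_ ?_
        · rw [len_inv, show x⁻¹ * y⁻¹ = (y * x)⁻¹ by group, len_inv]
          exact h3
        · rw [len_inv, show x⁻¹ * y⁻¹ = (y * x)⁻¹ by group, len_inv]
          exact h6
      · exact key y x h6 h3
      · refine key y x⁻¹ ?_ ?_
        · exact h8
        · rw [len_inv, show y * x⁻¹ = (x * y⁻¹)⁻¹ by group, len_inv]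
          exact h2
      · refine key y⁻¹ x ?_ h4
        rw [len_inv, show y⁻¹ * x = (x⁻¹ * y)⁻¹ by group, len_inv]
        exact h7
      · refine key y⁻¹ x⁻¹ ?_ ?_
        · rw [len_inv, show y⁻¹ * x⁻¹ = (x * y)⁻¹ by group, len_inv]
          exact h5
        · rw [len_inv, show y⁻¹ * x⁻¹ = (x * y)⁻¹ by group, len_inv]
          exact h1
    by_cases hPath : ∃ u v : F2,
        (((x = u ∨ x⁻¹ = u) ∧ (y = v ∨ y⁻¹ = v)) ∨ ((y = u ∨ y⁻¹ = u) ∧ (x = v ∨ x⁻¹ = v))) ∧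
        (toWord v).length ≤ canc (toWord u) (toWord v) + canc (toWord v) (toWord u)
    · -- pathology : composite move
      obtain ⟨u, v, hrole, hdeath⟩ := hPath
      have hrole' : (((x = v ∨ x⁻¹ = v) ∧ (y = u ∨ y⁻¹ = u)) ∨
          ((y = v ∨ y⁻¹ = v) ∧ (x = u ∨ x⁻¹ = u))) := by tauto
      have hmV := hmix u v hrole
      have hmU := hmix v u hrole'
      have hv1 : v ≠ 1 := by
        rcases hrole with ⟨_, (rfl | rfl)⟩ | ⟨_, (rfl | rfl)⟩
        · exact hy1
        · simpa using hy1
        · exact hx1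
        · simpa using hx1
      have hxmem : x ∈ closure ({v, u} : Set F2) := by
        rcases hrole with ⟨(rfl | rfl), _⟩ | ⟨_, (rfl | rfl)⟩
        · exact mem_cl_right _ _
        · simpa using inv_mem (mem_cl_right v x⁻¹)
        · exact mem_cl_left _ _
        · simpa using inv_mem (mem_cl_left x⁻¹ u)
      have hymem : y ∈ closure ({v, u} : Set F2) := by
        rcases hrole with ⟨_, (rfl | rfl)⟩ | ⟨(rfl | rfl), _⟩
        · exact mem_cl_left _ _
        · simpa using inv_mem (mem_cl_left y⁻¹ u)
        · exact mem_cl_right _ _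
        · simpa using inv_mem (mem_cl_right v y⁻¹)
      have hclvu : closure ({v, u} : Set F2) = ⊤ := cl_top hcl hxmem hymem
      have hvneq : (toWord v).length + (toWord u).length ≤ n + 1 := by
        rcases hrole with ⟨(rfl | rfl), (rfl | rfl)⟩ | ⟨(rfl | rfl), (rfl | rfl)⟩ <;>
          (try simp only [len_inv]) <;> omega
      have hP : Pc ⁅v, u⁆ := by
        refine descent hv1 (by omega) (by omega) hdeath (by omega) hclvu ?_
        intro x' y' hlt hcl''
        exact IH x' y' (by omega) hcl''
      -- transport back to ⁅x, y⁆
      rcases hrole with ⟨(rfl | rfl), (rfl | rfl)⟩ | ⟨(rfl | rfl), (rfl | rfl)⟩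
      · exact Pc_transport hP 1 (Or.inr (by simp only [commutatorElement_def]; group))
      · exact Pc_transport hP y (Or.inl (by simp only [commutatorElement_def]; group))
      · exact Pc_transport hP x (Or.inl (by simp only [commutatorElement_def]; group))
      · exact Pc_transport hP (x * y) (Or.inr (by simp only [commutatorElement_def]; group))
      · exact Pc_transport hP 1 (Or.inl (by simp only [commutatorElement_def]; group))
      · exact Pc_transport hP x (Or.inr (by simp only [commutatorElement_def]; group))
      · exact Pc_transport hP y (Or.inr (by simp only [commutatorElement_def]; group))
      · exact Pc_transport hP (y * x) (Or.inl (by simp only [commutatorElement_def]; group))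
    · -- no pathology : apply the counting lemma
      have hZne : ∀ p : Fin 2 × Bool, zz (fgen x y) p ≠ 1 := by
        rintro ⟨i, b⟩
        fin_cases i <;> cases b <;> simp [zz, fgen, hx1, hy1]
      have hZpos : ∀ p, 0 < (ZW (fgen x y) p).length := by
        intro p
        rw [List.length_pos_iff]
        intro h
        exact hZne p (toWord_eq_nil_iff.mp h)
      have hrole2 : ∀ p q : Fin 2 × Bool, p.1 ≠ q.1 →
          (((x = zz (fgen x y) p ∨ x⁻¹ = zz (fgen x y) p) ∧
            (y = zz (fgen x y) q ∨ y⁻¹ = zz (fgen x y) q)) ∨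
           ((y = zz (fgen x y) p ∨ y⁻¹ = zz (fgen x y) p) ∧
            (x = zz (fgen x y) q ∨ x⁻¹ = zz (fgen x y) q))) := by
        rintro ⟨i, b⟩ ⟨j, c⟩ hne
        fin_cases i <;> fin_cases j
        · exact absurd rfl hne
        · refine Or.inl ⟨?_, ?_⟩
          · cases b
            · exact Or.inr rfl
            · exact Or.inl rfl
          · cases c
            · exact Or.inr rfl
            · exact Or.inl rfl
        · refine Or.inr ⟨?_, ?_⟩
          · cases b
            · exact Or.inr rfl
            · exact Or.inl rfl
          · cases c
            · exact Or.inr rfl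
            · exact Or.inl rfl
        · exact absurd rfl hne
      have hsame : ∀ p q : Fin 2 × Bool, ¬ cp p q → p.1 = q.1 → p = q := by
        rintro ⟨i, b⟩ ⟨j, c⟩ hcp h1
        obtain rfl : i = j := h1
        cases b <;> cases c
        · rfl
        · exact absurd ⟨rfl, rfl⟩ hcp
        · exact absurd ⟨rfl, rfl⟩ hcp
        · rfl
      have hmix2 : ∀ p q : Fin 2 × Bool, p.1 ≠ q.1 →
          2 * canc (ZW (fgen x y) p) (ZW (fgen x y) q) ≤
            min (ZW (fgen x y) p).length (ZW (fgen x y) q).length :=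
        fun p q hne => hmix _ _ (hrole2 p q hne)
      have hself : ∀ p, 2 * canc (ZW (fgen x y) p) (ZW (fgen x y) p) <
          (ZW (fgen x y) p).length :=
        fun p => self_canc_lt (rd_toWord _) (fun h => hZne p (toWord_eq_nil_iff.mp h))
      have HS : ∀ p q, ¬ cp p q →
          canc (ZW (fgen x y) p) (ZW (fgen x y) q) < (ZW (fgen x y) q).length := by
        intro p q hpq
        by_cases h : p.1 = q.1
        · obtain rfl := hsame p q hpq h
          have := hself p
          omega
        · have ha := hmix2 p q h
          have hb := hZpos q
          omega
      have HS' : ∀ p q, ¬ cp p q →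
          canc (ZW (fgen x y) p) (ZW (fgen x y) q) < (ZW (fgen x y) p).length := by
        intro p q hpq
        by_cases h : p.1 = q.1
        · obtain rfl := hsame p q hpq h
          have := hself p
          omega
        · have ha := hmix2 p q h
          have hb := hZpos p
          omega
      have HND : ∀ p q r : Fin 2 × Bool, ¬ cp p q → ¬ cp q r →
          canc (ZW (fgen x y) p) (ZW (fgen x y) q) +
            canc (ZW (fgen x y) q) (ZW (fgen x y) r) < (ZW (fgen x y) q).length := by
        intro p q r hpq hqr
        by_cases h1 : p.1 = q.1
        · obtain rfl := hsame p q hpq h1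
          have hc1 := hself p
          by_cases h2 : p.1 = r.1
          · obtain rfl := hsame p r hqr h2
            omega
          · have hc2 := hmix2 p r h2
            omega
        · by_cases h2 : q.1 = r.1
          · obtain rfl := hsame q r hqr h2
            have hc2 := hself q
            have hc1 := hmix2 p q h1
            omega
          · have hpr : p.1 = r.1 := by
              have hfin : ∀ a b c : Fin 2, ¬ a = b → ¬ b = c → a = c := by decide
              exact hfin p.1 q.1 r.1 h1 h2
            by_cases h3 : p.2 = r.2
            · have hrp : p = r := Prod.ext hpr h3
              by_contra hcon
              push_neg at hcon
              refine hPath ⟨zz (fgen x y) p, zz (fgen x y) q, hrole2 p q h1, ?_⟩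
              rw [← hrp] at hcon
              exact hcon
            · have hzr : zz (fgen x y) r = (zz (fgen x y) p)⁻¹ := by
                rcases p with ⟨i, b⟩
                rcases r with ⟨j, c⟩
                obtain rfl : i = j := hpr
                cases b <;> cases c
                · exact absurd rfl h3
                · exact (inv_inv _).symm
                · rfl
                · exact absurd rfl h3
              have hthis : ZW (fgen x y) r = toWord ((zz (fgen x y) p)⁻¹) := by
                rw [ZW, hzr]
              rw [hthis]
              refine opp_no_death (hZne q) ?_ ?_
              · show 2 * canc (ZW (fgen x y) p) (ZW (fgen x y) q) ≤ (ZW (fgen x y) q).length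
                have := hmix2 p q h1
                omega
              · show 2 * canc (ZW (fgen x y) q) (toWord ((zz (fgen x y) p)⁻¹)) ≤
                  (ZW (fgen x y) q).length
                have h4 := hmix2 q r h2
                rw [hthis] at h4
                omega
      -- extraction of one-letter elements
      have hrangef : Set.range (fgen x y) = ({x, y} : Set F2) := by
        ext z
        constructor
        · rintro ⟨i, rfl⟩
          fin_cases i
          · exact Or.inl rfl
          · exact Or.inr rfl
        · rintro (rfl | rfl)
          exacts [⟨0, rfl⟩, ⟨1, rfl⟩]
      have extract : ∀ g0 : F2, (toWord g0).length = 1 →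
          g0 = x ∨ g0 = x⁻¹ ∨ g0 = y ∨ g0 = y⁻¹ := by
        intro g0 hg0len
        have hg0ne : g0 ≠ 1 := by
          intro h
          rw [h, toWord_one] at hg0len
          simp at hg0len
        have hmem : g0 ∈ (FreeGroup.lift (fgen x y)).range := by
          rw [FreeGroup.range_lift_eq_closure, hrangef, hcl]
          exact Subgroup.mem_top _
        obtain ⟨g1, hg1⟩ := hmem
        have hL : FreeGroup.lift (fgen x y) (mk (toWord g1)) = g0 := by
          rw [mk_toWord]; exact hg1
        have hLne : toWord g1 ≠ [] := by
          intro h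
          apply hg0ne
          rw [← hL, h, mk_nil]
          exact map_one (FreeGroup.lift (fgen x y))
        have hlen2 := glue_main (fgen x y)
          (by intro i0; fin_cases i0 <;> simp [fgen, hx1, hy1]) HS HS' HND
          (toWord g1) (rd_toWord g1) hLne
        rw [hL, hg0len] at hlen2
        obtain ⟨p, hp⟩ : ∃ p, toWord g1 = [p] := by
          apply List.length_eq_one_iff.mp
          have hpos : (toWord g1).length ≠ 0 :=
            fun h0 => hLne (List.length_eq_zero_iff.mp h0)
          omega
        have hval : g0 = zz (fgen x y) p := by
          rw [← hL, hp, FreeGroup.lift_mk]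
          simp [zz]
        rcases p with ⟨i, b⟩
        fin_cases i <;> cases b <;> rw [hval] <;> simp [zz, fgen]
      have hA4 := extract genA (by simp [genA, FreeGroup.toWord_of])
      have hB4 := extract genB (by simp [genB, FreeGroup.toWord_of])
      have hABne : genA ≠ genB := by decide
      have hABne' : genA ≠ genB⁻¹ := by decide
      rcases hA4 with hA | hA | hA | hA <;> rcases hB4 with hB | hB | hB | hB
      · exact absurd (hA.trans hB.symm) hABne
      · exact absurd (by rw [hA, hB, inv_inv] : genA = genB⁻¹) hABne'
      · obtain rfl := hA.symm
        obtain rfl := hB.symm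
        exact ⟨1, Or.inl (by simp only [commutatorElement_def]; group)⟩
      · obtain rfl := hA.symm
        have hy' : y = genB⁻¹ := by rw [hB, inv_inv]
        subst hy'
        exact ⟨genB⁻¹, Or.inr (by simp only [commutatorElement_def]; group)⟩
      · exact absurd (by rw [hA, hB, inv_inv] : genB = genA⁻¹).symm (by decide)
      · exact absurd (by rw [hA, hB] : genA = genB) hABne
      · have hx' : x = genA⁻¹ := by rw [hA, inv_inv]
        subst hx'
        obtain rfl := hB.symm
        exact ⟨genA⁻¹, Or.inr (by simp only [commutatorElement_def]; group)⟩
      · have hx' : x = genA⁻¹ := by rw [hA, inv_inv]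
        subst hx'
        have hy' : y = genB⁻¹ := by rw [hB, inv_inv]
        subst hy'
        exact ⟨(genB * genA)⁻¹, Or.inl (by simp only [commutatorElement_def]; group)⟩
      · obtain rfl := hA.symm
        obtain rfl := hB.symm
        exact ⟨1, Or.inr (by simp only [commutatorElement_def]; group)⟩
      · obtain rfl := hA.symm
        have hx' : x = genB⁻¹ := by rw [hB, inv_inv]
        subst hx'
        exact ⟨genB⁻¹, Or.inl (by simp only [commutatorElement_def]; group)⟩
      · exact absurd (hA.trans hB.symm) hABne
      · exact absurd (by rw [hA, hB, inv_inv] : genA = genB⁻¹) hABne'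
      · have hy' : y = genA⁻¹ := by rw [hA, inv_inv]
        subst hy'
        obtain rfl := hB.symm
        exact ⟨genA⁻¹, Or.inl (by simp only [commutatorElement_def]; group)⟩
      · have hy' : y = genA⁻¹ := by rw [hA, inv_inv]
        subst hy'
        have hx' : x = genB⁻¹ := by rw [hB, inv_inv]
        subst hx'
        exact ⟨(genA * genB)⁻¹, Or.inr (by simp only [commutatorElement_def]; group)⟩
      · exact absurd (by rw [hA, hB, inv_inv] : genB = genA⁻¹).symm (by decide)
      · exact absurd (by rw [hA, hB] : genA = genB) hABne



lemma cyclen_eq {L : List (Fin 2 × Bool)} (h : CRd L) : cyclen (mk L) = L.length := by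
  have hmem : L.length ∈
      {n : ℕ | ∃ h0 : F2, (FreeGroup.toWord (h0 * mk L * h0⁻¹)).length = n} :=
    ⟨1, by rw [one_mul, inv_one, mul_one, toWord_mk_rd h.1]⟩
  unfold cyclen
  apply _root_.le_antisymm
  · exact csInf_le (OrderBot.bddBelow _) hmem
  · apply le_csInf ⟨_, hmem⟩
    rintro n ⟨g, rfl⟩
    have hc : CRd (toWord (mk L)) := by rwa [toWord_mk_rd h.1]
    have h2 := conj_len_ge hc g
    rwa [toWord_mk_rd h.1] at h2

lemma cyclen_conj (g h : F2) : cyclen (h * g * h⁻¹) = cyclen g := by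
  unfold cyclen
  congr 1
  ext n
  constructor
  · rintro ⟨k, hk⟩
    exact ⟨k * h, by
      rw [show k * h * g * (k * h)⁻¹ = k * (h * g * h⁻¹) * k⁻¹ by group]
      exact hk⟩
  · rintro ⟨k, hk⟩
    exact ⟨k * h⁻¹, by
      rw [show k * h⁻¹ * (h * g * h⁻¹) * (k * h⁻¹)⁻¹ = k * g * k⁻¹ by group]
      exact hk⟩

lemma cyclen_zpow_crd {L : List (Fin 2 × Bool)} (h : CRd L) (k : ℤ) :
    cyclen ((mk L) ^ k) = k.natAbs * L.length := by
  rcases k with n | n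
  · rw [Int.ofNat_eq_coe, zpow_natCast, mk_powWord, cyclen_eq (crd_powWord h n),
      powWord_length]
    simp
  · rw [zpow_negSucc, mk_powWord, inv_mk,
      cyclen_eq (crd_invRev (crd_powWord h (n + 1))), invRev_length, powWord_length]
    simp [Int.natAbs_negSucc]

lemma nielsen_aut (φ : MulAut F2) : Pc (φ ⁅genA, genB⁆) := by
  have h1 : Subgroup.closure ({genA, genB} : Set F2) = ⊤ := by
    have h0 := FreeGroup.closure_range_of (Fin 2)
    have hr : Set.range (FreeGroup.of : Fin 2 → F2) = {genA, genB} := by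
      ext z
      constructor
      · rintro ⟨i, rfl⟩
        fin_cases i
        · exact Or.inl rfl
        · exact Or.inr rfl
      · rintro (rfl | rfl)
        exacts [⟨0, rfl⟩, ⟨1, rfl⟩]
    rwa [hr] at h0
  have hcl : Subgroup.closure ({φ genA, φ genB} : Set F2) = ⊤ := by
    have h2 : ({φ genA, φ genB} : Set F2) = φ.toMonoidHom '' {genA, genB} := by
      rw [Set.image_pair]
      rfl
    rw [h2, ← MonoidHom.map_closure, h1]
    exact Subgroup.map_top_of_surjective _ φ.surjective
  have h3 := nielsen_pair ((toWord (φ genA)).length + (toWord (φ genB)).length)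
    (φ genA) (φ genB) le_rfl hcl
  rwa [← map_commutatorElement] at h3

/-- the standard commutator word -/
def Lc : List (Fin 2 × Bool) := [(0, true), (1, true), (0, false), (1, false)]

lemma Cab_mk : ⁅genA, genB⁆ = mk Lc := by decide

lemma crd_Lc : CRd Lc := ⟨by rw [rd_iff]; decide, by decide⟩

lemma cyclen_phi (k : ℤ) (φ : MulAut F2) :
    cyclen (φ (⁅genA, genB⁆ ^ k)) = 4 * k.natAbs := by
  have h2 : ∀ w z : F2, w * z * w⁻¹ = (MulAut.conj w) z := fun w z => by
    simp [MulAut.conj_apply]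
  obtain ⟨w, hw | hw⟩ := nielsen_aut φ
  · have he : φ (⁅genA, genB⁆ ^ k) = w * ⁅genA, genB⁆ ^ k * w⁻¹ := by
      rw [map_zpow, hw, h2, h2, ← map_zpow]
    rw [he, cyclen_conj, Cab_mk, cyclen_zpow_crd crd_Lc]
    show k.natAbs * Lc.length = 4 * k.natAbs
    rw [show Lc.length = 4 from rfl]
    omega
  · have he : φ (⁅genA, genB⁆ ^ k) = w * ⁅genA, genB⁆ ^ (-k) * w⁻¹ := by
      rw [map_zpow, hw, h2, h2, ← map_zpow]
      rw [zpow_neg, inv_zpow]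
    rw [he, cyclen_conj, Cab_mk, cyclen_zpow_crd crd_Lc]
    show (-k).natAbs * Lc.length = 4 * k.natAbs
    rw [show Lc.length = 4 from rfl, Int.natAbs_neg]
    omega

end NPf

/-- (1) For every integer `k` and every automorphism `φ` of `F₂`, the element
`φ([a,b]^k)` has cyclically reduced length `4|k|` with respect to both bases `{a,b}` and
`{a, ab}`; (2) nonetheless the two length functions differ, e.g. on `b`. -/
theorem commutator_orbit_lengths :
    (∀ (k : ℤ) (φ : MulAut (FreeGroup (Fin 2))),
      cyclen (φ (⁅genA, genB⁆ ^ k)) = 4 * k.natAbs ∧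
      cyclenB (φ (⁅genA, genB⁆ ^ k)) = 4 * k.natAbs) ∧
    cyclen genB = 1 ∧ cyclenB genB = 2 ∧ cyclen ≠ cyclenB := by
  have h1 : cyclen genB = 1 := by
    rw [show genB = FreeGroup.mk [((1 : Fin 2), true)] from rfl,
      NPf.cyclen_eq ⟨by rw [NPf.rd_iff]; decide, by decide⟩]
    rfl
  have h2 : cyclenB genB = 2 := by
    show cyclen (psiAut.symm genB) = 2
    have hval : psiAut.symm genB = genA⁻¹ * genB := by
      show FreeGroup.lift (fun i => if i = 0 then genA else genA⁻¹ * genB)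
        (FreeGroup.of 1) = genA⁻¹ * genB
      rw [FreeGroup.lift_apply_of]
      norm_num
    rw [hval,
      show genA⁻¹ * genB = FreeGroup.mk [((0 : Fin 2), false), ((1 : Fin 2), true)] by decide,
      NPf.cyclen_eq ⟨by rw [NPf.rd_iff]; decide, by decide⟩]
    rfl
  refine ⟨fun k φ => ⟨NPf.cyclen_phi k φ, ?_⟩, h1, h2, ?_⟩
  · show cyclen (psiAut.symm (φ (⁅genA, genB⁆ ^ k))) = 4 * k.natAbs
    exact NPf.cyclen_phi k (φ.trans psiAut.symm)
  · intro h
    have h3 := congrFun h genB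
    rw [h1, h2] at h3
    exact absurd h3 (by decide)
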